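/- Let C be a braided monoidal category, and let I : C → Z₁(C) and Ĩ : C̃ → Z₁(C) be the embeddings given by I(X) = (X, c(X,-)) and Ĩ(X) = (X, c(-,X)^{-1}), where C̃ is C with the reversed braiding. Then the relative commutant of I(C) inside Z₁(C) equals Ĩ(C̃), and the relative commutant of Ĩ(C̃) equals I(C). In particular I(C)'' = I(C). -/

import Mathlib

open CategoryTheory MonoidalCategory

section Aux

variable {C : Type*} [Category C] [MonoidalCategory C] [BraidedCategory C]

/-- The object of the Drinfeld center given by the reversed braiding. -/
def revBraidedObj (X : C) : Center C :=
  ⟨X, { β := fun U => (β_ U X).symm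
        monoidal := fun U U' => by
          simp only [Iso.symm_hom, BraidedCategory.braiding_tensor_left_hom]
          simp
        naturality := fun {U U'} f => by
          simp only [Iso.symm_hom]
          rw [Iso.comp_inv_eq, Category.assoc, BraidedCategory.braiding_naturality_left]
          simp }⟩

lemma center_braiding_hom_f (X Y : Center C) :
    (β_ X Y).hom.f = (X.2.β Y.1).hom := rfl

lemma center_comp_eq_id_iff {X Y : Center C} (f : X ⟶ Y) (g : Y ⟶ X) :
    f ≫ g = 𝟙 X ↔ f.f ≫ g.f = 𝟙 X.1 := by
  constructor
  · intro h; exact congrArg Center.Hom.f h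
  · intro h; ext; exact h

end Aux

/-- For a braided monoidal category `C`, in the Drinfeld center `Z₁(C)` the relative
commutant of the image of `I : C → Z₁(C)` (objects with half braiding `c(X,-)`) is exactly the
image of `Ĩ : C̃ → Z₁(C)` (objects with half braiding `c(-,X)⁻¹`, i.e. the reversed braiding),
and vice versa.  In particular `I(C)'' = I(C)`. -/
theorem center_commutant_ofBraided {C : Type*} [Category C] [MonoidalCategory C]
    [BraidedCategory C] :
    let InI : Center C → Prop := fun Z => ∀ U : C, (Z.2.β U).hom = (β_ Z.1 U).hom
    let InIt : Center C → Prop := fun Z => ∀ U : C, (Z.2.β U).hom = (β_ U Z.1).inv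
    let Comm : (Center C → Prop) → Center C → Prop := fun P Z =>
      ∀ W : Center C, P W → (β_ W Z).hom ≫ (β_ Z W).hom = 𝟙 (W ⊗ Z)
    (∀ Z : Center C, Comm InI Z ↔ InIt Z) ∧
    (∀ Z : Center C, Comm InIt Z ↔ InI Z) ∧
    (∀ Z : Center C, Comm (Comm InI) Z ↔ InI Z) := by
  intro InI InIt Comm
  have hI : ∀ U : C, InI (Center.ofBraidedObj U) := fun U V => rfl
  have hIt : ∀ U : C, InIt (revBraidedObj U) := fun U V => rfl
  have key1 : ∀ Z : Center C, Comm InI Z ↔ InIt Z := by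
    intro Z
    constructor
    · intro h U
      have := h (Center.ofBraidedObj U) (hI U)
      rw [center_comp_eq_id_iff] at this
      rw [center_braiding_hom_f, center_braiding_hom_f] at this
      simp only [Center.ofBraidedObj] at this
      replace this := (Iso.hom_comp_eq_id (β_ U Z.fst)).mp this
      simpa using this
    · intro h W hW
      rw [center_comp_eq_id_iff, center_braiding_hom_f, center_braiding_hom_f,
        hW Z.1, h W.1]
      simp
  have key2 : ∀ Z : Center C, Comm InIt Z ↔ InI Z := by
    intro Z
    constructor
    · intro h U
      have := h (revBraidedObj U) (hIt U)
      rw [center_comp_eq_id_iff, center_braiding_hom_f, center_braiding_hom_f] at this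
      simp only [revBraidedObj, Iso.symm_hom] at this
      replace this := (Iso.hom_comp_eq_id (β_ Z.fst U).symm).mp this
      simpa using this
    · intro h W hW
      rw [center_comp_eq_id_iff, center_braiding_hom_f, center_braiding_hom_f,
        hW Z.1, h W.1]
      simp
  refine ⟨key1, key2, fun Z => ?_⟩
  have : Comm (Comm InI) Z ↔ Comm InIt Z := by
    constructor
    · intro h W hW; exact h W ((key1 W).mpr hW)
    · intro h W hW; exact h W ((key1 W).mp hW)
  rw [this, key2]
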